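/- Monotonicity of the switch curve for two contents (Lemma 4 of the paper): in the uniform-channel setting with M = 2 contents, let V : 𝒬 → ℝ be monotone and let u, v ∈ Fin 2 with u ≠ v. For any state Q ∈ 𝒬 with Q v < N v: if J_V(Q + e_v, u) ≤ J_V(Q + e_v, v), then J_V(Q, u) ≤ J_V(Q, v). Equivalently, the switch curves s₁(Q₂) and s₂(Q₁) of the optimal two-content policy are monotonically non-decreasing in Q₂ and Q₁, respectively. -/

import Mathlib

open Finset

/-- State space of the uniform-channel multicast MDP: request queue vectors capped by `N`. -/
def QSpace (M : ℕ) (N : Fin M → ℕ) : Type :=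
  {Q : Fin M → ℕ // ∀ m, Q m ≤ N m}

/-- Next state when content `u` is multicast in state `Q` and arrival `a` occurs. -/
def nextQ {M : ℕ} {N : Fin M → ℕ} (Q : QSpace M N) (u : Fin M) (a : Fin M → ℕ) :
    QSpace M N :=
  ⟨fun m => min ((if m = u then 0 else Q.1 m) + a m) (N m), fun _ => min_le_right _ _⟩

/-- Per-stage cost in the uniform case. -/
noncomputable def gCost {M : ℕ} {N : Fin M → ℕ} (wp wf : ℝ) (p f : Fin M → ℝ)
    (Q : QSpace M N) (u : Fin M) : ℝ :=
  (∑ m, (Q.1 m : ℝ)) + wp * p u + wf * f u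

/-- State-action cost function `J_V(Q,u)`. -/
noncomputable def JCost {M : ℕ} {N : Fin M → ℕ} (𝒜 : Finset (Fin M → ℕ))
    (ρ : (Fin M → ℕ) → ℝ) (wp wf : ℝ) (p f : Fin M → ℝ)
    (V : QSpace M N → ℝ) (Q : QSpace M N) (u : Fin M) : ℝ :=
  gCost wp wf p f Q u + ∑ a ∈ 𝒜, ρ a * V (nextQ Q u a)

/-- The state `Q + e_v`: component `v` is increased by 1 (requires `Q v < N v`). -/
def addE {M : ℕ} {N : Fin M → ℕ} (Q : QSpace M N) (v : Fin M) (h : Q.1 v < N v) :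
    QSpace M N :=
  ⟨Function.update Q.1 v (Q.1 v + 1), by
    intro m
    rcases eq_or_ne m v with rfl | hm
    · simp only [Function.update_self]; exact h
    · simp only [Function.update_of_ne hm]; exact Q.2 m⟩

/-- Monotonicity of the switch curve for two contents (Lemma 4): with `M = 2` contents
and a monotone value function `V`, if it is (weakly) better to multicast content `u`
than content `v` at state `Q + e_v`, then it is also better at state `Q`.  Equivalently,
the switch curves `s₁(Q₂)` and `s₂(Q₁)` are monotonically non-decreasing. -/
theorem switch_curve_monotone_two_contents
    (N : Fin 2 → ℕ)
    (𝒜 : Finset (Fin 2 → ℕ)) (ρ : (Fin 2 → ℕ) → ℝ)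
    (hρ0 : ∀ a ∈ 𝒜, 0 ≤ ρ a) (hρ1 : ∑ a ∈ 𝒜, ρ a = 1)
    (wp wf : ℝ) (p f : Fin 2 → ℝ)
    (V : QSpace 2 N → ℝ)
    (hV : ∀ Q₁ Q₂ : QSpace 2 N, Q₁.1 ≤ Q₂.1 → V Q₁ ≤ V Q₂)
    (u v : Fin 2) (huv : u ≠ v)
    (Q : QSpace 2 N) (h : Q.1 v < N v)
    (hswitch : JCost 𝒜 ρ wp wf p f V (addE Q v h) u ≤
      JCost 𝒜 ρ wp wf p f V (addE Q v h) v) :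
    JCost 𝒜 ρ wp wf p f V Q u ≤ JCost 𝒜 ρ wp wf p f V Q v := by
  have hg : ∀ x : Fin 2, gCost wp wf p f (addE Q v h) x = gCost wp wf p f Q x + 1 := by
    intro x
    have hn : ∑ m, (addE Q v h).1 m = (∑ m, Q.1 m) + 1 := by
      simp only [addE]
      rw [Finset.sum_update_of_mem (Finset.mem_univ v),
        ← Finset.add_sum_erase _ _ (Finset.mem_univ v)]
      ring_nf
      rw [Finset.erase_eq]
    have hsum : ∑ m, ((addE Q v h).1 m : ℝ) = (∑ m, (Q.1 m : ℝ)) + 1 := by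
      rw [← Nat.cast_sum, hn]
      push_cast
      ring
    simp only [gCost, hsum]; ring
  have hvv : ∀ a, nextQ (addE Q v h) v a = nextQ Q v a := by
    intro a
    apply Subtype.ext
    funext m
    rcases eq_or_ne m v with rfl | hm
    · simp [nextQ]
    · simp [nextQ, addE, hm, Function.update_of_ne hm]
  have hu : ∀ a, (nextQ Q u a).1 ≤ (nextQ (addE Q v h) u a).1 := by
    intro a m
    rcases eq_or_ne m u with rfl | hm
    · simp [nextQ]
    · simp only [nextQ, addE, if_neg hm]
      rcases eq_or_ne m v with rfl | hm2
      · exact min_le_min (by simp [Function.update_self]) le_rfl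
      · simp [Function.update_of_ne hm2]
  have hJu : JCost 𝒜 ρ wp wf p f V Q u ≤ JCost 𝒜 ρ wp wf p f V (addE Q v h) u - 1 := by
    simp only [JCost, hg]
    have : ∑ a ∈ 𝒜, ρ a * V (nextQ Q u a) ≤
        ∑ a ∈ 𝒜, ρ a * V (nextQ (addE Q v h) u a) := by
      apply Finset.sum_le_sum
      intro a ha
      exact mul_le_mul_of_nonneg_left (hV _ _ (hu a)) (hρ0 a ha)
    linarith
  have hJv : JCost 𝒜 ρ wp wf p f V (addE Q v h) v - 1 = JCost 𝒜 ρ wp wf p f V Q v := by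
    simp only [JCost, hg]
    have : ∑ a ∈ 𝒜, ρ a * V (nextQ (addE Q v h) v a) =
        ∑ a ∈ 𝒜, ρ a * V (nextQ Q v a) := by
      apply Finset.sum_congr rfl
      intro a _
      rw [hvv a]
    rw [this]; ring
  linarith
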